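/- Consider the planar affine system ż = A_R z + μ(a3R, b3R) where A_R has eigenvalues λ_R ± iω_R with λ_R < 0 and ω_R > 0, a2R > 0, μ = 1, and virtual equilibrium (x_R*, y_R*) with x_R* < 0. Given q > ζ_R := −a3R/a2R, let T_R(q) ∈ (0, π/ω_R) be the first positive time at which the solution starting at (0, q) (which enters x > 0) returns to x = 0, and let P_R(q) be the y-coordinate of the return point. Then q − ζ_R = ξ_R e^{−λ_R T_R} ρ(ω_R T_R; λ_R/ω_R)/sin(ω_R T_R) and P_R(q) − ζ_R = −ξ_R e^{λ_R T_R} ρ(ω_R T_R; −λ_R/ω_R)/sin(ω_R T_R), where ξ_R = β_R ω_R / (a2R (λ_R² + ω_R²)), β_R = a3R b2R − a2R b3R, and ρ(s;ν) = 1 − e^{νs}(cos s − ν sin s). -/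

import Mathlib

open Matrix Real

set_option maxHeartbeats 1000000

lemma exp_matrix_rot (J : Matrix (Fin 2) (Fin 2) ℝ) (hJ : J * J = -1) (x y : ℝ) :
    NormedSpace.exp (x • (1 : Matrix (Fin 2) (Fin 2) ℝ) + y • J)
      = (Real.exp x * Real.cos y) • (1 : Matrix (Fin 2) (Fin 2) ℝ)
        + (Real.exp x * Real.sin y) • J := by
  letI : SeminormedRing (Matrix (Fin 2) (Fin 2) ℝ) := Matrix.linftyOpSemiNormedRing
  letI : NormedRing (Matrix (Fin 2) (Fin 2) ℝ) := Matrix.linftyOpNormedRing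
  letI : NormedAlgebra ℝ (Matrix (Fin 2) (Fin 2) ℝ) := Matrix.linftyOpNormedAlgebra
  set f : ℂ →ₐ[ℝ] Matrix (Fin 2) (Fin 2) ℝ := Complex.liftAux J hJ with hf
  have hc : Continuous f := f.toLinearMap.continuous_of_finiteDimensional
  have key : ∀ z : ℂ, f z = z.re • (1 : Matrix (Fin 2) (Fin 2) ℝ) + z.im • J := by
    intro z
    rw [hf, Complex.liftAux_apply, Algebra.algebraMap_eq_smul_one]
  have h1 : x • (1 : Matrix (Fin 2) (Fin 2) ℝ) + y • J = f ⟨x, y⟩ := by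
    rw [key]
  rw [h1]
  refine (NormedSpace.map_exp f hc _).symm.trans ?_
  rw [show (NormedSpace.exp (⟨x,y⟩ : ℂ)) = Complex.exp ⟨x,y⟩ by
    rw [Complex.exp_eq_exp_ℂ]]
  rw [key, Complex.exp_re, Complex.exp_im]

lemma scalar_main (a1 a2 a3 b1 b2 b3 lam om q E c S z0 z1 P : ℝ)
    (htr : a1 + b2 = 2*lam) (hdet : a1*b2 - a2*b1 = lam^2+om^2)
    (hcs : c^2 + S^2 = 1)
    (hz0 : (lam^2+om^2)*z0 = -(b2*a3 - a2*b3))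
    (hz1 : (lam^2+om^2)*z1 = b1*a3 - a1*b3)
    (hret : om*(E*c*(0-z0)) + E*S*((a1-lam)*(0-z0) + a2*(q-z1)) + om*z0 = 0)
    (hP : om*P = om*(E*c*(q-z1) + z1) + E*S*(b1*(0-z0) + (b2-lam)*(q-z1))) :
    S*E*((a2*q+a3)*(lam^2+om^2)) = (a3*b2 - a2*b3)*(om - om*E*c + lam*E*S)
    ∧ E*S*(S*om*(a2*P+a3)*(lam^2+om^2)) = E*S*((a3*b2-a2*b3)*om*(om*c + lam*S - om*E)) := by
  constructor
  · linear_combination (lam^2+om^2) * hret + (om*E*c + E*S*(a1-lam) - om) * hz0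
      + E*S*a2 * hz1 - E*S*a3 * hdet
  · linear_combination (E*S^2*a2*(lam^2+om^2)) * hP
      + (S*(lam^2+om^2)*(om*E*c + E*S*(b2-lam))) * hret
      + (om*E*S^2*a2) * hz1
      + (S*(om^2*E^2*c^2 - om^2*E*c - om*E*S*(b2-lam) + om^2*E^2*S^2)) * hz0
      + (S*(lam^2+om^2)*z0*(om*E^2*c*S - lam*E^2*S^2) + (a3*b2-a2*b3)*om*E*S^2) * htr
      + (S*(lam^2+om^2)*z0*E^2*S^2 - om*E*S^2*a3) * hdet
      + (-S*(a3*b2-a2*b3)*E^2*om^2) * hcs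

/-- The auxiliary function ρ(s; ν) = 1 − e^{νs}(cos s − ν sin s). -/
noncomputable def rho (s ν : ℝ) : ℝ := 1 - Real.exp (ν * s) * (Real.cos s - ν * Real.sin s)

/-- Implicit formulas for the half-return map `P_R` and return time `T_R`
of the right half-system (with `μ = 1`). -/
theorem stmt_11 (a1R a2R a3R b1R b2R b3R lamR omR : ℝ)
    (ha2R : a2R > 0) (hlamR : lamR < 0) (homR : omR > 0)
    (A : Matrix (Fin 2) (Fin 2) ℝ) (hA : A = !![a1R, a2R; b1R, b2R])
    (htr : a1R + b2R = 2 * lamR)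
    (hdet : a1R * b2R - a2R * b1R = lamR ^ 2 + omR ^ 2)
    (zstar : Fin 2 → ℝ) (hzstar : zstar = -(A⁻¹ *ᵥ ![a3R, b3R]))
    (hvirtual : zstar 0 < 0)
    (ζR : ℝ) (hζR : ζR = -a3R / a2R)
    (q : ℝ) (hq : q > ζR)
    (φ : ℝ → Fin 2 → ℝ)
    (hφ : ∀ t, φ t = NormedSpace.exp (t • A) *ᵥ (![0, q] - zstar) + zstar)
    (T : ℝ) (hT : T ∈ Set.Ioo 0 (Real.pi / omR))
    (hreturn : φ T 0 = 0)
    (hfirst : ∀ t ∈ Set.Ioo 0 T, φ t 0 > 0)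
    (P ξR βR : ℝ) (hP : P = φ T 1)
    (hβR : βR = a3R * b2R - a2R * b3R)
    (hξR : ξR = βR * omR / (a2R * (lamR ^ 2 + omR ^ 2))) :
    q - ζR = ξR * Real.exp (-lamR * T) * rho (omR * T) (lamR / omR)
               / Real.sin (omR * T) ∧
    P - ζR = -ξR * Real.exp (lamR * T) * rho (omR * T) (-lamR / omR)
               / Real.sin (omR * T) := by
  have hom : omR ≠ 0 := ne_of_gt homR
  have ha2 : a2R ≠ 0 := ne_of_gt ha2R
  have hd : lamR ^ 2 + omR ^ 2 ≠ 0 := by positivity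
  set E : ℝ := Real.exp (lamR * T) with hE
  have hE0 : E ≠ 0 := Real.exp_ne_zero _
  set c : ℝ := Real.cos (omR * T) with hc
  set S : ℝ := Real.sin (omR * T) with hSdef
  have hS : 0 < S := by
    apply Real.sin_pos_of_pos_of_lt_pi
    · exact mul_pos homR hT.1
    · rw [mul_comm]
      exact (lt_div_iff₀ homR).mp hT.2
  have hcs : c ^ 2 + S ^ 2 = 1 := by
    rw [hc, hSdef]; exact Real.cos_sq_add_sin_sq _
  -- the rotation generator
  set N : Matrix (Fin 2) (Fin 2) ℝ := !![a1R - lamR, a2R; b1R, b2R - lamR] with hN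
  set J : Matrix (Fin 2) (Fin 2) ℝ := omR⁻¹ • N with hJ
  have hNN : N * N = (-(omR ^ 2)) • (1 : Matrix (Fin 2) (Fin 2) ℝ) := by
    ext i j
    fin_cases i <;> fin_cases j <;>
      simp [hN, Matrix.mul_apply, Fin.sum_univ_two] <;>
    [linear_combination a1R * htr - hdet; linear_combination a2R * htr;
     linear_combination b1R * htr; linear_combination b2R * htr - hdet]
  have hJJ : J * J = -1 := by
    rw [hJ, Matrix.smul_mul, Matrix.mul_smul, smul_smul, hNN, smul_smul]
    rw [show omR⁻¹ * omR⁻¹ * -(omR ^ 2) = -1 by field_simp]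
    simp
  have hTA : T • A = (T * lamR) • (1 : Matrix (Fin 2) (Fin 2) ℝ) + (T * omR) • J := by
    have h1 : (T * omR) • J = T • N := by
      rw [hJ, smul_smul, show T * omR * omR⁻¹ = T by field_simp]
    rw [h1]
    ext i j
    fin_cases i <;> fin_cases j <;>
      simp [hA, hN, Matrix.one_apply] <;> ring
  have hexpT : NormedSpace.exp (T • A)
      = (E * c) • (1 : Matrix (Fin 2) (Fin 2) ℝ) + (E * S) • J := by
    rw [hTA, exp_matrix_rot J hJJ, hE, hc, hSdef, mul_comm T lamR, mul_comm T omR]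
  -- inverse of A
  have hAinv : A⁻¹ = (lamR ^ 2 + omR ^ 2)⁻¹ • !![b2R, -a2R; -b1R, a1R] := by
    apply Matrix.inv_eq_right_inv
    have h1 : A * !![b2R, -a2R; -b1R, a1R] = (lamR ^ 2 + omR ^ 2) • 1 := by
      ext i j
      fin_cases i <;> fin_cases j <;>
        simp [hA, Matrix.mul_apply, Fin.sum_univ_two, Matrix.one_apply] <;>
        first | ring1 | linear_combination hdet
    rw [mul_smul_comm, h1, smul_smul, inv_mul_cancel₀ hd, one_smul]
  have hz0 : (lamR ^ 2 + omR ^ 2) * zstar 0 = -(b2R * a3R - a2R * b3R) := by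
    rw [hzstar, hAinv]
    simp [Matrix.mulVec, dotProduct, Fin.sum_univ_two]
    field_simp
    ring
  have hz1 : (lamR ^ 2 + omR ^ 2) * zstar 1 = b1R * a3R - a1R * b3R := by
    rw [hzstar, hAinv]
    simp [Matrix.mulVec, dotProduct, Fin.sum_univ_two]
    field_simp
    ring
  -- components of φ T
  have hphi0 : φ T 0 = E * c * (0 - zstar 0)
      + E * S * (omR⁻¹ * ((a1R - lamR) * (0 - zstar 0) + a2R * (q - zstar 1)))
      + zstar 0 := by
    rw [hφ, hexpT, Matrix.add_mulVec, Matrix.smul_mulVec, Matrix.smul_mulVec,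
      Matrix.one_mulVec, hJ, Matrix.smul_mulVec]
    simp only [Pi.add_apply, Pi.smul_apply, Pi.sub_apply, smul_eq_mul, hN,
      Matrix.mulVec, dotProduct, Fin.sum_univ_two, Matrix.cons_val_zero,
      Matrix.cons_val_one, Matrix.head_cons, Matrix.cons_val', Matrix.empty_val',
      Matrix.cons_val_fin_one, Matrix.of_apply, Matrix.vecHead, Matrix.vecTail]
    try ring
  have hphi1 : φ T 1 = E * c * (q - zstar 1)
      + E * S * (omR⁻¹ * (b1R * (0 - zstar 0) + (b2R - lamR) * (q - zstar 1)))
      + zstar 1 := by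
    rw [hφ, hexpT, Matrix.add_mulVec, Matrix.smul_mulVec, Matrix.smul_mulVec,
      Matrix.one_mulVec, hJ, Matrix.smul_mulVec]
    simp only [Pi.add_apply, Pi.smul_apply, Pi.sub_apply, smul_eq_mul, hN,
      Matrix.mulVec, dotProduct, Fin.sum_univ_two, Matrix.cons_val_zero,
      Matrix.cons_val_one, Matrix.head_cons, Matrix.cons_val', Matrix.empty_val',
      Matrix.cons_val_fin_one, Matrix.of_apply, Matrix.vecHead, Matrix.vecTail]
    try ring
  have hret : omR * (E * c * (0 - zstar 0))
      + E * S * ((a1R - lamR) * (0 - zstar 0) + a2R * (q - zstar 1))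
      + omR * zstar 0 = 0 := by
    have h := hreturn
    rw [hphi0] at h
    field_simp at h
    linear_combination h
  have hPom : omR * P = omR * (E * c * (q - zstar 1) + zstar 1)
      + E * S * (b1R * (0 - zstar 0) + (b2R - lamR) * (q - zstar 1)) := by
    rw [hP, hphi1]
    field_simp
    ring
  obtain ⟨C1, C2⟩ := scalar_main a1R a2R a3R b1R b2R b3R lamR omR q E c S
    (zstar 0) (zstar 1) P htr hdet hcs hz0 hz1 hret hPom
  constructor
  · rw [hζR, hξR, hβR, rho,
      show lamR / omR * (omR * T) = lamR * T by field_simp,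
      show -lamR * T = -(lamR * T) by ring, Real.exp_neg, ← hE, ← hc, ← hSdef]
    rw [eq_div_iff (ne_of_gt hS)]
    field_simp
    linear_combination C1
  · rw [hζR, hξR, hβR, rho,
      show -lamR / omR * (omR * T) = -(lamR * T) by field_simp,
      Real.exp_neg, ← hE, ← hc, ← hSdef]
    rw [eq_div_iff (ne_of_gt hS)]
    have C2' := mul_left_cancel₀ (mul_ne_zero hE0 (ne_of_gt hS)) C2
    field_simp
    have C2'' : S * (a2R * P + a3R) * (lamR ^ 2 + omR ^ 2)
        = (a3R * b2R - a2R * b3R) * (omR * c + lamR * S - omR * E) :=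
      mul_left_cancel₀ hom (by linear_combination C2')
    linear_combination C2''
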